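/- Let C be a finite solvable group and let p be a prime divisor of |C| such that for every prime power q > 1 dividing |C| with p not dividing q, p is coprime to q − 1. Then C has a normal Sylow p-subgroup. -/

import Mathlib

open Subgroup

lemma exists_comm_normal_ne_bot (C : Type*) [Group C] [Group.IsSolvable C] [Nontrivial C] :
    ∃ A : Subgroup C, A.Normal ∧ A ≠ ⊥ ∧ IsMulCommutative A := by
  classical
  obtain ⟨n, hn⟩ := Group.IsSolvable.solvable (G := C)
  have hex : ∃ m, derivedSeries C m = ⊥ := ⟨n, hn⟩
  have hms : derivedSeries C (Nat.find hex) = ⊥ := Nat.find_spec hex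
  have hm0 : Nat.find hex ≠ 0 := by
    intro h
    rw [h, derivedSeries_zero] at hms
    exact top_ne_bot hms
  obtain ⟨k, hk⟩ : ∃ k, Nat.find hex = k + 1 :=
    ⟨Nat.find hex - 1, (Nat.succ_pred_eq_of_pos (Nat.pos_of_ne_zero hm0)).symm⟩
  refine ⟨derivedSeries C k, derivedSeries_normal _ _,
    Nat.find_min hex (hk ▸ Nat.lt_succ_self k), ?_⟩
  rw [hk, derivedSeries_succ] at hms
  exact le_centralizer_iff_isMulCommutative.mp (commutator_eq_bot_iff_le_centralizer.mp hms)

lemma exists_primepow_normal (C : Type*) [Group C] [Finite C] [Group.IsSolvable C] [Nontrivial C] :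
    ∃ (N : Subgroup C) (q k : ℕ), q.Prime ∧ N.Normal ∧ Nat.card N = q ^ k ∧ q ∣ Nat.card N := by
  obtain ⟨A, hAn, hAbot, hAcomm⟩ := exists_comm_normal_ne_bot C
  haveI := hAn
  haveI := hAcomm
  have hA1 : Nat.card A ≠ 1 := by
    simpa [Subgroup.card_eq_one] using hAbot
  set q := (Nat.card A).minFac with hq
  have hqp : q.Prime := Nat.minFac_prime hA1
  haveI : Fact q.Prime := ⟨hqp⟩
  obtain ⟨Q⟩ : Nonempty (Sylow q ↥A) := inferInstance
  have hQn : (Q : Subgroup ↥A).Normal := inferInstance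
  haveI := Sylow.characteristic_of_normal Q hQn
  refine ⟨(Q : Subgroup ↥A).map A.subtype, q, (Nat.card A).factorization q, hqp,
    inferInstance, ?_, ?_⟩
  · rw [← Sylow.card_eq_multiplicity Q]
    exact (Nat.card_congr ((Q : Subgroup ↥A).equivMapOfInjective A.subtype
      A.subtype_injective).toEquiv).symm
  · have h1 : q ∣ Nat.card ↥(Q : Subgroup ↥A) :=
      Q.dvd_card_of_dvd_card (Nat.minFac_dvd _)
    rwa [Nat.card_congr ((Q : Subgroup ↥A).equivMapOfInjective A.subtype
      A.subtype_injective).toEquiv] at h1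

universe u

lemma sylow_final {p : ℕ} {C : Type u} [Group C] [Finite C] [Fact p.Prime] (H : Subgroup C)
    (hN : H.Normal) (hcard : Nat.card H = p ^ (Nat.card C).factorization p) :
    ∃ P : Sylow p C, (P : Subgroup C).Normal :=
  ⟨Sylow.ofCard H hcard, by rwa [Sylow.coe_ofCard]⟩

lemma sylow_aux (p : ℕ) (hp : p.Prime) :
    ∀ (n : ℕ) (C : Type u) [Group C] [Finite C] [Group.IsSolvable C],
      Nat.card C = n → p ∣ Nat.card C →
      (∀ q : ℕ, IsPrimePow q → q ∣ Nat.card C → ¬ p ∣ q → Nat.Coprime p (q - 1)) →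
      ∃ P : Sylow p C, (P : Subgroup C).Normal := by
  haveI : Fact p.Prime := ⟨hp⟩
  intro n
  induction n using Nat.strong_induction_on with
  | _ n ih =>
  intro C _ _ _ hn hdvd h
  haveI : Nontrivial C := by
    rw [← Finite.one_lt_card_iff_nontrivial]
    exact lt_of_lt_of_le hp.one_lt (Nat.le_of_dvd Nat.card_pos hdvd)
  obtain ⟨N, q, k, hqp, hNn, hNcard, hqdvdN⟩ := exists_primepow_normal C
  haveI := hNn
  have hN1 : 1 < Nat.card N := lt_of_lt_of_le hqp.one_lt (Nat.le_of_dvd Nat.card_pos hqdvdN)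
  have hNdvd : Nat.card N ∣ Nat.card C := Subgroup.card_subgroup_dvd_card N
  have hCC : Nat.card C = Nat.card (C ⧸ N) * Nat.card N :=
    Subgroup.card_eq_card_quotient_mul_card_subgroup N
  have hC'0 : Nat.card (C ⧸ N) ≠ 0 := Nat.card_pos.ne'
  have hN0 : Nat.card N ≠ 0 := Nat.card_pos.ne'
  have hC'dvd : Nat.card (C ⧸ N) ∣ Nat.card C := Dvd.intro _ (hCC.symm)
  have hlt : Nat.card (C ⧸ N) < n := by
    rw [← hn, hCC]
    exact (Nat.lt_mul_iff_one_lt_right Nat.card_pos).mpr hN1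
  have h' : ∀ r : ℕ, IsPrimePow r → r ∣ Nat.card (C ⧸ N) → ¬ p ∣ r → Nat.Coprime p (r - 1) :=
    fun r h1 h2 h3 => h r h1 (h2.trans hC'dvd) h3
  have hfac : (Nat.card C).factorization p
      = (Nat.card (C ⧸ N)).factorization p + (Nat.card N).factorization p := by
    rw [hCC, Nat.factorization_mul hC'0 hN0]
    simp
  by_cases hpN : p ∣ Nat.card N
  · -- p = q
    have hpq : p = q :=
      (Nat.prime_dvd_prime_iff_eq hp hqp).mp (hp.dvd_of_dvd_pow (hNcard ▸ hpN))
    have hNk : (Nat.card N).factorization p = k := by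
      rw [hNcard, hpq, hqp.factorization_pow, Finsupp.single_eq_same]
    by_cases hpC' : p ∣ Nat.card (C ⧸ N)
    · obtain ⟨P', hP'⟩ := ih _ hlt (C ⧸ N) rfl hpC' h'
      set H := (P' : Subgroup (C ⧸ N)).comap (QuotientGroup.mk' N) with hHdef
      haveI : H.Normal := Subgroup.Normal.comap hP' _
      have hHidx : H.index = (P' : Subgroup (C ⧸ N)).index :=
        Subgroup.index_comap_of_surjective _ (QuotientGroup.mk'_surjective N)
      have hidx0 : (P' : Subgroup (C ⧸ N)).index ≠ 0 := Subgroup.index_ne_zero_of_finite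
      have hHcard : Nat.card H = Nat.card (P' : Subgroup (C ⧸ N)) * Nat.card N := by
        have e1 : Nat.card H * (P' : Subgroup (C ⧸ N)).index = Nat.card C := by
          rw [← hHidx]; exact Subgroup.card_mul_index H
        have e2 : Nat.card (P' : Subgroup (C ⧸ N)) * (P' : Subgroup (C ⧸ N)).index
            = Nat.card (C ⧸ N) := Subgroup.card_mul_index _
        refine Nat.eq_of_mul_eq_mul_right (Nat.pos_of_ne_zero hidx0) ?_
        rw [e1, hCC, ← e2]
        ring
      refine sylow_final H inferInstance ?_
      rw [hHcard, P'.card_eq_multiplicity, hNcard, ← hpq, hfac, hNk, pow_add]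
    · refine sylow_final N hNn ?_
      rw [hfac, Nat.factorization_eq_zero_of_not_dvd hpC', zero_add, hNk, hNcard, hpq]
  · -- p ≠ q
    have hpq : p ≠ q := fun e => hpN (e ▸ hqdvdN)
    have hNp0 : (Nat.card N).factorization p = 0 := Nat.factorization_eq_zero_of_not_dvd hpN
    have hpC' : p ∣ Nat.card (C ⧸ N) := by
      rcases (Nat.Prime.dvd_mul hp).mp (hCC ▸ hdvd) with h1 | h1
      exacts [h1, absurd h1 hpN]
    obtain ⟨P', hP'⟩ := ih _ hlt (C ⧸ N) rfl hpC' h'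
    set H := (P' : Subgroup (C ⧸ N)).comap (QuotientGroup.mk' N) with hHdef
    haveI hHnormal : H.Normal := Subgroup.Normal.comap hP' _
    have hHidx : H.index = (P' : Subgroup (C ⧸ N)).index :=
      Subgroup.index_comap_of_surjective _ (QuotientGroup.mk'_surjective N)
    have hidx0 : (P' : Subgroup (C ⧸ N)).index ≠ 0 := Subgroup.index_ne_zero_of_finite
    have hHcard : Nat.card H = Nat.card (P' : Subgroup (C ⧸ N)) * Nat.card N := by
      have e1 : Nat.card H * (P' : Subgroup (C ⧸ N)).index = Nat.card C := by
        rw [← hHidx]; exact Subgroup.card_mul_index H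
      have e2 : Nat.card (P' : Subgroup (C ⧸ N)) * (P' : Subgroup (C ⧸ N)).index
          = Nat.card (C ⧸ N) := Subgroup.card_mul_index _
      refine Nat.eq_of_mul_eq_mul_right (Nat.pos_of_ne_zero hidx0) ?_
      rw [e1, hCC, ← e2]
      ring
    have hP'0 : Nat.card (P' : Subgroup (C ⧸ N)) ≠ 0 := Nat.card_pos.ne'
    have hHfac : (Nat.card H).factorization p = (Nat.card (C ⧸ N)).factorization p := by
      rw [hHcard, Nat.factorization_mul hP'0 hN0, Finsupp.add_apply, hNp0, add_zero,
        P'.card_eq_multiplicity, hp.factorization_pow, Finsupp.single_eq_same]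
    obtain ⟨P⟩ : Nonempty (Sylow p H) := inferInstance
    have hPcard : Nat.card (P : Subgroup H) = Nat.card (P' : Subgroup (C ⧸ N)) := by
      rw [P.card_eq_multiplicity, P'.card_eq_multiplicity, hHfac]
    have hPidx : (P : Subgroup H).index = Nat.card N := by
      have e3 : Nat.card (P : Subgroup H) * (P : Subgroup H).index = Nat.card H :=
        Subgroup.card_mul_index _
      rw [hPcard, hHcard] at e3
      exact Nat.eq_of_mul_eq_mul_left (Nat.pos_of_ne_zero hP'0) e3
    have hsyl : Nat.card (Sylow p H) = 1 := by
      have h1 : Nat.card (Sylow p H) ∣ q ^ k := by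
        have := Sylow.card_dvd_index P
        rwa [hPidx, hNcard] at this
      obtain ⟨j, hj, hje⟩ := (Nat.dvd_prime_pow hqp).mp h1
      rcases Nat.eq_zero_or_pos j with rfl | hj0
      · simpa using hje
      · exfalso
        have hqj : IsPrimePow (q ^ j) := ⟨q, j, hqp.prime, hj0, rfl⟩
        have hqjd : q ^ j ∣ Nat.card C := (pow_dvd_pow q hj).trans (hNcard ▸ hNdvd)
        have hnd : ¬ p ∣ q ^ j := fun hd =>
          hpq ((Nat.prime_dvd_prime_iff_eq hp hqp).mp (hp.dvd_of_dvd_pow hd))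
        have hcop := h (q ^ j) hqj hqjd hnd
        have hmod := card_sylow_modEq_one p H
        have h1le : 1 ≤ Nat.card (Sylow p H) := Nat.card_pos
        have hdq : p ∣ q ^ j - 1 := by
          have := (Nat.modEq_iff_dvd' h1le).mp hmod.symm
          rwa [hje] at this
        have hd1 : p ∣ 1 := hcop ▸ Nat.dvd_gcd dvd_rfl hdq
        exact hp.one_lt.ne' (Nat.dvd_one.mp hd1)
    have hPn : (P : Subgroup H).Normal := by
      rw [← Subgroup.normalizer_eq_top_iff, ← Subgroup.index_eq_one,
]
      exact (Sylow.card_eq_index_normalizer P).symm.trans hsyl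
    haveI := Sylow.characteristic_of_normal P hPn
    refine sylow_final ((P : Subgroup H).map H.subtype) inferInstance ?_
    have hmap : Nat.card ((P : Subgroup H).map H.subtype) = Nat.card (P : Subgroup H) :=
      (Nat.card_congr ((P : Subgroup H).equivMapOfInjective H.subtype
        H.subtype_injective).toEquiv).symm
    rw [hmap, P.card_eq_multiplicity, hHfac, hfac, hNp0, add_zero]

theorem normal_sylow_of_coprime_condition {C : Type*} [Group C] [Fintype C] [Group.IsSolvable C]
    (p : ℕ) (hp : p.Prime) (hdvd : p ∣ Fintype.card C)
    (h : ∀ q : ℕ, IsPrimePow q → q ∣ Fintype.card C → ¬ p ∣ q → Nat.Coprime p (q - 1)) :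
    ∃ P : Sylow p C, (P : Subgroup C).Normal := by
  have e : Nat.card C = Fintype.card C := Nat.card_eq_fintype_card
  exact sylow_aux p hp (Nat.card C) C rfl (by rw [e]; exact hdvd)
    (fun q h1 h2 h3 => h q h1 (by rwa [e] at h2) h3)
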